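/- Let (X,d_X) and (Y,d_Y) be bounded metric spaces with diam X ≤ diam Y, and φ : X → Y a map with d_Y(φ(x), φ(x')) ≥ d_X(x, x') for all x, x'. Then the induced map Hyp(φ)(x,h) := (φ(x), h) from (X × (0, diam X], ρ_X) to (Y × (0, diam Y], ρ_Y) is noncontractive: ρ_Y(Hyp(φ)(x,h), Hyp(φ)(x',h')) ≥ ρ_X((x,h),(x',h')). -/
import Mathlib


/-- The Bonk–Schramm hyperbolic filling distance on `Z × (0, diam Z]`. -/
noncomputable def hypDist {Z : Type*} [PseudoMetricSpace Z] (p q : Z × ℝ) : ℝ :=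
  2 * Real.log ((dist p.1 q.1 + max p.2 q.2) / Real.sqrt (p.2 * q.2))

/-- A noncontractive map `φ : X → Y` between bounded metric spaces with
`diam X ≤ diam Y` induces a noncontractive map `Hyp(φ)` between hyperbolic fillings. -/
theorem stmt_12 {X Y : Type*} [MetricSpace X] [MetricSpace Y]
    (hbX : Bornology.IsBounded (Set.univ : Set X))
    (hbY : Bornology.IsBounded (Set.univ : Set Y))
    (hΔ : Metric.diam (Set.univ : Set X) ≤ Metric.diam (Set.univ : Set Y))
    (φ : X → Y) (hφ : ∀ x x' : X, dist x x' ≤ dist (φ x) (φ x')) :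
    ∀ (x x' : X) (h h' : ℝ), h ∈ Set.Ioc 0 (Metric.diam (Set.univ : Set X)) →
      h' ∈ Set.Ioc 0 (Metric.diam (Set.univ : Set X)) →
      hypDist ((x, h) : X × ℝ) (x', h') ≤ hypDist ((φ x, h) : Y × ℝ) (φ x', h') := by
  intro x x' h h' hh hh'
  have hs : 0 < Real.sqrt (h * h') := Real.sqrt_pos.2 (mul_pos hh.1 hh'.1)
  have hm : 0 < max h h' := lt_max_of_lt_left hh.1
  simp only [hypDist]
  have h1 : 0 < (dist x x' + max h h') / Real.sqrt (h * h') :=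
    div_pos (add_pos_of_nonneg_of_pos dist_nonneg hm) hs
  have h2 : (dist x x' + max h h') / Real.sqrt (h * h') ≤
      (dist (φ x) (φ x') + max h h') / Real.sqrt (h * h') := by
    gcongr; exact hφ x x'
  linarith [Real.log_le_log h1 h2]
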